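/- Generalized selection lemma (the all-north argument for an arbitrary choice of single-qubit colouring): for each r ∈ {1, …, n}, let N_r be a set of rays of ℂ² containing exactly one of the two rays of every pair of orthogonal unit vectors of ℂ² (i.e., for every unit ψ ∈ ℂ² with orthogonal complement spanned by ψ^⊥, exactly one of the rays ℂψ, ℂψ^⊥ belongs to N_r). Then every orthonormal basis of (ℂ²)^{⊗n} consisting of product vectors contains exactly one element ψ₁ ⊗ ⋯ ⊗ ψₙ such that the ray of ψ_r belongs to N_r for all r ∈ {1, …, n}. -/

import Mathlib

open scoped InnerProductSpace
open MeasureTheory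

noncomputable section

abbrev Qubit : Type := EuclideanSpace ℂ (Fin 2)
abbrev NQubit (n : ℕ) : Type := EuclideanSpace ℂ (Fin n → Fin 2)

/-- The product vector `ψ₁ ⊗ ⋯ ⊗ ψₙ` in `(ℂ²)^{⊗n}`, modelled concretely as
`EuclideanSpace ℂ (Fin n → Fin 2)`; its inner products satisfy
`⟨tens ψ, tens χ⟩ = ∏ j, ⟨ψ j, χ j⟩`. -/
noncomputable def tens {n : ℕ} (ψ : Fin n → Qubit) : NQubit n :=
  WithLp.toLp 2 (fun f => ∏ j, ψ j (f j))

/-- A vector of `(ℂ²)^{⊗n}` is a product vector if it is of the form `ψ₁ ⊗ ⋯ ⊗ ψₙ`. -/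
def IsProduct {n : ℕ} (v : NQubit n) : Prop := ∃ ψ : Fin n → Qubit, v = tens ψ

/-- A finite set of vectors forming an orthonormal basis of `H`. -/
def IsONBasis {H : Type*} [NormedAddCommGroup H] [InnerProductSpace ℂ H]
    (B : Finset H) : Prop :=
  Orthonormal ℂ (fun v : B => (v : H)) ∧ Submodule.span ℂ (B : Set H) = ⊤

/-- A KS-colouring of a set `S` of unit vectors: a `{0,1}`-valued map (modelled as a
predicate, `c v` meaning value `1`) such that every orthonormal basis contained in `S`
has exactly one element of value `1`, and no two mutually orthogonal elements of `S`
both have value `1`. -/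
def IsKSColouring {H : Type*} [NormedAddCommGroup H] [InnerProductSpace ℂ H]
    (S : Set H) (c : H → Prop) : Prop :=
  (∀ B : Finset H, ↑B ⊆ S → IsONBasis B → ∃! v, v ∈ B ∧ c v) ∧
  (∀ ψ ∈ S, ∀ χ ∈ S, ⟪ψ, χ⟫_ℂ = 0 → ¬(c ψ ∧ c χ))

lemma inner_tens {n} (ψ χ : Fin n → Qubit) : ⟪tens ψ, tens χ⟫_ℂ = ∏ r, ⟪ψ r, χ r⟫_ℂ := by
  classical
  simp only [PiLp.inner_apply, RCLike.inner_apply', tens, PiLp.toLp_apply]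
  rw [Fintype.prod_sum (fun r (i : Fin 2) => (starRingEnd ℂ) (ψ r i) * χ r i)]
  simp [map_prod, Finset.prod_mul_distrib]

lemma tens_smul {n} (ψ : Fin n → Qubit) (a : Fin n → ℂ) :
    tens (fun r => a r • ψ r) = (∏ r, a r) • tens ψ := by
  ext f
  simp only [tens, PiLp.smul_apply, smul_eq_mul, PiLp.toLp_apply]
  rw [← Finset.prod_mul_distrib]

lemma tens_eq_zero {n} (ψ : Fin n → Qubit) (r : Fin n) (h : ψ r = 0) : tens ψ = 0 := by
  ext f
  show (∏ j, ψ j (f j)) = 0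
  exact Finset.prod_eq_zero (Finset.mem_univ r) (by rw [h]; rfl)

lemma norm_tens {n} (ψ : Fin n → Qubit) : ‖tens ψ‖ = ∏ r, ‖ψ r‖ := by
  have h := inner_tens ψ ψ
  simp only [inner_self_eq_norm_sq_to_K] at h
  have h2 : ‖tens ψ‖ ^ 2 = ∏ r, ‖ψ r‖ ^ 2 := by exact_mod_cast h
  rw [Finset.prod_pow] at h2
  exact sq_eq_sq₀ (norm_nonneg _) (Finset.prod_nonneg fun r _ => norm_nonneg _) |>.mp h2

lemma exists_unit_witness {n} (v : NQubit n) (hv : IsProduct v) (hn : ‖v‖ = 1) :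
    ∃ ψ : Fin n → Qubit, v = tens ψ ∧ ∀ r, ‖ψ r‖ = 1 := by
  obtain ⟨ψ, rfl⟩ := hv
  have hz : ∀ r, ψ r ≠ 0 := by
    intro r hr
    rw [tens_eq_zero ψ r hr] at hn
    simp at hn
  refine ⟨fun r => (‖ψ r‖⁻¹ : ℂ) • ψ r, ?_, ?_⟩
  · rw [tens_smul]
    have : (∏ r, ((‖ψ r‖ : ℂ))⁻¹) = ((∏ r, ‖ψ r‖ : ℝ) : ℂ)⁻¹ := by
      push_cast [Finset.prod_inv_distrib]; ring
    rw [this, ← norm_tens, hn]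
    simp
  · intro r
    rw [norm_smul]
    simp [norm_inv, inv_mul_cancel₀ (norm_ne_zero_iff.mpr (hz r))]

lemma tens_snoc_apply {n} (ψ : Fin n → Qubit) (φ : Qubit) (f : Fin (n+1) → Fin 2) :
    tens (Fin.snoc ψ φ) f = tens ψ (fun i => f i.castSucc) * φ (f (Fin.last n)) := by
  show (∏ j : Fin (n+1), (Fin.snoc ψ φ : Fin (n+1) → Qubit) j (f j)) = _
  rw [Fin.prod_univ_castSucc]
  simp only [Fin.snoc_castSucc, Fin.snoc_last]
  rfl

lemma inner_tens_split {n} (ψ χ : Fin (n+1) → Qubit) :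
    ⟪tens ψ, tens χ⟫_ℂ =
      ⟪tens (Fin.init ψ), tens (Fin.init χ)⟫_ℂ * ⟪ψ (Fin.last n), χ (Fin.last n)⟫_ℂ := by
  rw [inner_tens, inner_tens, Fin.prod_univ_castSucc]
  rfl

lemma card_eq_pow {n : ℕ} (B : Finset (NQubit n)) (hB : IsONBasis B) : B.card = 2 ^ n := by
  have li : LinearIndependent ℂ (fun v : B => (v : NQubit n)) := hB.1.linearIndependent
  have hb : Submodule.span ℂ (Set.range (fun v : B => (v : NQubit n))) = ⊤ := by
    rw [show (Set.range fun v : B => (v : NQubit n)) = (B : Set (NQubit n)) from Subtype.range_val]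
    exact hB.2
  let b : Module.Basis B ℂ (NQubit n) := Module.Basis.mk li hb.ge
  have := Module.finrank_eq_card_basis b
  rw [finrank_euclideanSpace] at this
  simp only [Fintype.card_coe] at this
  rw [← this]
  simp

lemma exists_selected :
    ∀ (n : ℕ) (N : Fin n → Set Qubit),
      (∀ r, ∀ ψ : Qubit, ∀ a : ℂ, a ≠ 0 → (ψ ∈ N r ↔ a • ψ ∈ N r)) →
      (∀ r, ∀ ψ χ : Qubit, ‖ψ‖ = 1 → ‖χ‖ = 1 → ⟪ψ, χ⟫_ℂ = 0 → Xor' (ψ ∈ N r) (χ ∈ N r)) →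
      ∀ B : Finset (NQubit n), IsONBasis B → (∀ v ∈ B, IsProduct v) →
      ∃ v ∈ B, ∃ ψ : Fin n → Qubit, v = tens ψ ∧ (∀ r, ‖ψ r‖ = 1) ∧ ∀ r, ψ r ∈ N r := by
  intro n
  induction n with
  | zero =>
    intro N hray hsel B hB hprod
    have hcard : B.card = 1 := by simpa using card_eq_pow B hB
    obtain ⟨v, hv⟩ := Finset.card_eq_one.mp hcard
    have hvB : v ∈ B := by rw [hv]; exact Finset.mem_singleton_self v
    obtain ⟨ψ, hψ, hψu⟩ :=
      exists_unit_witness v (hprod v hvB) (hB.1.1 ⟨v, hvB⟩)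
    exact ⟨v, hvB, ψ, hψ, hψu, fun r => r.elim0⟩
  | succ n IH =>
    intro N hray hsel B hB hprod
    classical
    have norm1 : ∀ v ∈ B, ‖v‖ = 1 := fun v hv => hB.1.1 ⟨v, hv⟩
    have orth : ∀ v ∈ B, ∀ u ∈ B, v ≠ u → ⟪v, u⟫_ℂ = 0 := by
      intro v hv u hu hne
      have hne' : (⟨v, hv⟩ : {x // x ∈ B}) ≠ ⟨u, hu⟩ :=
        fun h => hne (congrArg Subtype.val h)
      exact hB.1.2 hne'
    have hwit : ∀ v, v ∈ B → ∃ ψ : Fin (n+1) → Qubit, v = tens ψ ∧ ∀ r, ‖ψ r‖ = 1 :=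
      fun v hv => exists_unit_witness v (hprod v hv) (norm1 v hv)
    choose! w hw1 hw2 using hwit
    set lst := Fin.last n with hlst
    set D : Finset (NQubit (n+1)) := B.filter (fun v => w v lst ∈ N lst) with hD
    set D' : Finset (NQubit (n+1)) := B.filter (fun v => ¬ (w v lst ∈ N lst)) with hD'
    set g : NQubit (n+1) → NQubit n := fun v => tens (Fin.init (w v)) with hg
    have normg : ∀ v ∈ B, ‖g v‖ = 1 := by
      intro v hv
      rw [hg, norm_tens]
      exact Finset.prod_eq_one fun r _ => hw2 v hv r.castSucc
    have key : ∀ v ∈ B, ∀ u ∈ B, v ≠ u → ⟪w v lst, w u lst⟫_ℂ ≠ 0 → ⟪g v, g u⟫_ℂ = 0 := by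
      intro v hv u hu hne hinner
      have h0 := orth v hv u hu hne
      rw [hw1 v hv, hw1 u hu, inner_tens_split] at h0
      rcases mul_eq_zero.mp h0 with h | h
      · exact h
      · exact absurd h hinner
    have keyD : ∀ v ∈ D, ∀ u ∈ D, v ≠ u → ⟪g v, g u⟫_ℂ = 0 := by
      intro v hv u hu hne
      obtain ⟨hvB, hvN⟩ := Finset.mem_filter.mp hv
      obtain ⟨huB, huN⟩ := Finset.mem_filter.mp hu
      refine key v hvB u huB hne fun h0 => ?_
      rcases hsel lst (w v lst) (w u lst) (hw2 v hvB lst) (hw2 u huB lst) h0 with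
        ⟨_, hnot⟩ | ⟨_, hnot⟩
      exacts [hnot huN, hnot hvN]
    have keyD' : ∀ v ∈ D', ∀ u ∈ D', v ≠ u → ⟪g v, g u⟫_ℂ = 0 := by
      intro v hv u hu hne
      obtain ⟨hvB, hvN⟩ := Finset.mem_filter.mp hv
      obtain ⟨huB, huN⟩ := Finset.mem_filter.mp hu
      refine key v hvB u huB hne fun h0 => ?_
      rcases hsel lst (w v lst) (w u lst) (hw2 v hvB lst) (hw2 u huB lst) h0 with
        ⟨ha, _⟩ | ⟨hb, _⟩
      exacts [hvN ha, huN hb]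
    have main : ∀ E : Finset (NQubit (n+1)), E ⊆ B →
        (∀ v ∈ E, ∀ u ∈ E, v ≠ u → ⟪g v, g u⟫_ℂ = 0) →
        Orthonormal ℂ (fun x : (E.image g) => (x : NQubit n)) ∧
          E.card = (E.image g).card := by
      intro E hEB hperp
      have hinj : Set.InjOn g ↑E := by
        intro v hv u hu heq
        by_contra hne
        have h := hperp v hv u hu hne
        rw [heq, inner_self_eq_zero] at h
        have hn := normg u (hEB hu)
        rw [h] at hn
        simp at hn
      refine ⟨⟨?_, ?_⟩, (Finset.card_image_of_injOn hinj).symm⟩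
      · rintro ⟨x, hx⟩
        obtain ⟨v, hv, rfl⟩ := Finset.mem_image.mp hx
        exact normg v (hEB hv)
      · rintro ⟨x, hx⟩ ⟨y, hy⟩ hxy
        obtain ⟨v, hv, rfl⟩ := Finset.mem_image.mp hx
        obtain ⟨u, hu, rfl⟩ := Finset.mem_image.mp hy
        have hne : v ≠ u := fun h => hxy (by subst h; rfl)
        exact hperp v hv u hu hne
    obtain ⟨onD, cardD⟩ := main D (Finset.filter_subset _ _) keyD
    obtain ⟨onD', cardD'⟩ := main D' (Finset.filter_subset _ _) keyD'
    have hrank : Module.finrank ℂ (NQubit n) = 2 ^ n := by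
      rw [finrank_euclideanSpace]
      simp
    have hDle : D.card ≤ 2 ^ n := by
      rw [cardD, ← hrank, ← Fintype.card_coe]
      exact onD.linearIndependent.fintype_card_le_finrank
    have hD'le : D'.card ≤ 2 ^ n := by
      rw [cardD', ← hrank, ← Fintype.card_coe]
      exact onD'.linearIndependent.fintype_card_le_finrank
    have hsum : D.card + D'.card = 2 ^ (n + 1) := by
      rw [hD, hD', Finset.card_filter_add_card_filter_not]
      exact card_eq_pow B hB
    have hDcard : D.card = 2 ^ n := by omega
    have hspan : Submodule.span ℂ ((D.image g : Finset (NQubit n)) : Set (NQubit n)) = ⊤ := by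
      have := onD.linearIndependent.span_eq_top_of_card_eq_finrank'
        (by rw [Fintype.card_coe, ← cardD, hDcard, hrank])
      rwa [show (Set.range fun x : (D.image g) => (x : NQubit n)) =
        ((D.image g : Finset (NQubit n)) : Set (NQubit n)) from Subtype.range_val] at this
    have hprod' : ∀ x ∈ D.image g, IsProduct x := by
      intro x hx
      obtain ⟨v, _, rfl⟩ := Finset.mem_image.mp hx
      exact ⟨Fin.init (w v), rfl⟩
    obtain ⟨x, hxF, χ, hxχ, hχu, hχN⟩ :=
      IH (fun i => N i.castSucc) (fun i => hray i.castSucc) (fun i => hsel i.castSucc)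
        (D.image g) ⟨onD, hspan⟩ hprod'
    obtain ⟨v, hvD, rfl⟩ := Finset.mem_image.mp hxF
    obtain ⟨hvB, hvN⟩ := Finset.mem_filter.mp hvD
    have hx : tens χ = tens (Fin.init (w v)) := hxχ.symm
    refine ⟨v, hvB, Fin.snoc χ (w v lst), ?_, ?_, ?_⟩
    · have h2 : tens (w v) = tens (Fin.snoc χ (w v lst)) := by
        ext f
        conv_lhs => rw [← Fin.snoc_init_self (w v)]
        rw [tens_snoc_apply, tens_snoc_apply, hx]
      exact (hw1 v hvB).trans h2
    · intro r
      refine Fin.lastCases ?_ ?_ r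
      · rw [Fin.snoc_last]; exact hw2 v hvB lst
      · intro i; rw [Fin.snoc_castSucc]; exact hχu i
    · intro r
      refine Fin.lastCases ?_ ?_ r
      · rw [Fin.snoc_last]; exact hvN
      · intro i; rw [Fin.snoc_castSucc]; exact hχN i

lemma selected_unique
    (n : ℕ) (N : Fin n → Set Qubit)
    (hray : ∀ r, ∀ ψ : Qubit, ∀ a : ℂ, a ≠ 0 → (ψ ∈ N r ↔ a • ψ ∈ N r))
    (hsel : ∀ r, ∀ ψ χ : Qubit, ‖ψ‖ = 1 → ‖χ‖ = 1 → ⟪ψ, χ⟫_ℂ = 0 →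
      Xor' (ψ ∈ N r) (χ ∈ N r))
    (B : Finset (NQubit n)) (hB : IsONBasis B)
    {u v : NQubit n} (huB : u ∈ B) (hvB : v ∈ B)
    {χ ψ : Fin n → Qubit} (huχ : u = tens χ) (hvψ : v = tens ψ)
    (hχN : ∀ r, χ r ∈ N r) (hψN : ∀ r, ψ r ∈ N r) : u = v := by
  by_contra hne
  have hne' : (⟨u, huB⟩ : {x // x ∈ B}) ≠ ⟨v, hvB⟩ :=
    fun h => hne (congrArg Subtype.val h)
  have h0 : ⟪u, v⟫_ℂ = 0 := hB.1.2 hne'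
  rw [huχ, hvψ, inner_tens] at h0
  obtain ⟨r, -, hr⟩ := Finset.prod_eq_zero_iff.mp h0
  have hu0 : u ≠ 0 := by
    intro h
    have h1 : ‖u‖ = 1 := hB.1.1 ⟨u, huB⟩
    rw [h] at h1
    simp at h1
  have hv0 : v ≠ 0 := by
    intro h
    have h1 : ‖v‖ = 1 := hB.1.1 ⟨v, hvB⟩
    rw [h] at h1
    simp at h1
  have hχ0 : χ r ≠ 0 := fun h => hu0 (by rw [huχ, tens_eq_zero χ r h])
  have hψ0 : ψ r ≠ 0 := fun h => hv0 (by rw [hvψ, tens_eq_zero ψ r h])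
  set a : ℂ := ((‖χ r‖ : ℂ))⁻¹ with ha_def
  set b : ℂ := ((‖ψ r‖ : ℂ))⁻¹ with hb_def
  have ha : a ≠ 0 := by
    simp [ha_def, Complex.ofReal_eq_zero, norm_eq_zero, hχ0]
  have hb : b ≠ 0 := by
    simp [hb_def, Complex.ofReal_eq_zero, norm_eq_zero, hψ0]
  have hna : ‖a • χ r‖ = 1 := by
    rw [norm_smul, ha_def]
    simp [inv_mul_cancel₀ (norm_ne_zero_iff.mpr hχ0)]
  have hnb : ‖b • ψ r‖ = 1 := by
    rw [norm_smul, hb_def]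
    simp [inv_mul_cancel₀ (norm_ne_zero_iff.mpr hψ0)]
  have hinner : ⟪a • χ r, b • ψ r⟫_ℂ = 0 := by
    rw [inner_smul_left, inner_smul_right, hr]
    ring
  have hmema : a • χ r ∈ N r := (hray r (χ r) a ha).mp (hχN r)
  have hmemb : b • ψ r ∈ N r := (hray r (ψ r) b hb).mp (hψN r)
  rcases hsel r (a • χ r) (b • ψ r) hna hnb hinner with ⟨-, hn⟩ | ⟨-, hn⟩
  exacts [hn hmemb, hn hmema]

/-- generalized selection lemma: if, for each `r`, `N r` is a ray-invariant
set of qubit vectors containing exactly one ray out of every pair of orthogonal unit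
vectors of `ℂ²`, then every orthonormal basis of `(ℂ²)^{⊗n}` consisting of product
vectors contains exactly one element `ψ₁ ⊗ ⋯ ⊗ ψₙ` with the ray of `ψ r` in `N r` for
all `r`. -/
theorem product_basis_exactly_one_selected
    (n : ℕ) (N : Fin n → Set Qubit)
    (hray : ∀ r, ∀ ψ : Qubit, ∀ a : ℂ, a ≠ 0 → (ψ ∈ N r ↔ a • ψ ∈ N r))
    (hsel : ∀ r, ∀ ψ χ : Qubit, ‖ψ‖ = 1 → ‖χ‖ = 1 → ⟪ψ, χ⟫_ℂ = 0 →
      Xor' (ψ ∈ N r) (χ ∈ N r))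
    (B : Finset (NQubit n)) (hB : IsONBasis B) (hprod : ∀ v ∈ B, IsProduct v) :
    ∃! v, v ∈ B ∧ ∃ ψ : Fin n → Qubit, v = tens ψ ∧ ∀ r, ψ r ∈ N r := by
  obtain ⟨v, hvB, ψ, hvψ, -, hψN⟩ := exists_selected n N hray hsel B hB hprod
  refine ⟨v, ⟨hvB, ψ, hvψ, hψN⟩, ?_⟩
  rintro u ⟨huB, χ, huχ, hχN⟩
  exact selected_unique n N hray hsel B hB huB hvB huχ hvψ hχN hψN

end
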